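/- arXiv:1003.0173 — 4 statements merged into one kernel-verified Lean document; each statement's English description precedes it below -/
import Mathlib

section
/- For all real τ > 0, 0 < p < 1 and every natural number k ≥ 1, lim_{h → 0+} (1/h) · (Γ(h/τ + k)/(k! · Γ(h/τ))) · p^{h/τ} · (1-p)^k = τ^{-1} (1-p)^k / k. (This identifies the infinitesimal jump probabilities of the Poisson gamma process.) -/
open Filter Real

/-- The infinitesimal jump probabilities of the Poisson gamma process:
`lim_{h → 0+} (1/h) Γ(h/τ + k)/(k! Γ(h/τ)) p^{h/τ} (1-p)^k = τ⁻¹ (1-p)^k / k`. -/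
theorem poisson_gamma_infinitesimal_prob
    (τ p : ℝ) (hτ : 0 < τ) (hp0 : 0 < p) (hp1 : p < 1) (k : ℕ) (hk : 1 ≤ k) :
    Tendsto
      (fun h : ℝ =>
        (1 / h) * (Real.Gamma (h / τ + k) / ((Nat.factorial k) * Real.Gamma (h / τ))) *
          p ^ (h / τ) * (1 - p) ^ k)
      (nhdsWithin 0 (Set.Ioi 0))
      (nhds (τ⁻¹ * (1 - p) ^ k / k)) := by
  have hg : Tendsto
      (fun h : ℝ =>
        Real.Gamma (h / τ + k) / (τ * (Nat.factorial k) * Real.Gamma (h / τ + 1)) *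
          p ^ (h / τ) * (1 - p) ^ k)
      (nhdsWithin 0 (Set.Ioi 0))
      (nhds (τ⁻¹ * (1 - p) ^ k / k)) := by
    have hcont : ContinuousAt
        (fun h : ℝ =>
          Real.Gamma (h / τ + k) / (τ * (Nat.factorial k) * Real.Gamma (h / τ + 1)) *
            p ^ (h / τ) * (1 - p) ^ k) 0 := by
      have hdiv : ContinuousAt (fun h : ℝ => h / τ) 0 := by fun_prop
      have hG1 : ContinuousAt (fun h : ℝ => Real.Gamma (h / τ + k)) 0 := by
        have hGk : ContinuousAt Real.Gamma ((0:ℝ) / τ + k) := by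
          refine Real.differentiableAt_Gamma (fun m => ?_) |>.continuousAt
          have hkk : (0:ℝ) < k := by exact_mod_cast hk
          have hm : (0:ℝ) ≤ m := Nat.cast_nonneg m
          intro h; rw [zero_div, zero_add] at h; nlinarith
        exact ContinuousAt.comp (g := Real.Gamma) (f := fun h : ℝ => h / τ + (k:ℝ)) (x := (0:ℝ)) hGk (hdiv.add continuousAt_const)
      have hG2 : ContinuousAt (fun h : ℝ => Real.Gamma (h / τ + 1)) 0 := by
        have hG1' : ContinuousAt Real.Gamma ((0:ℝ) / τ + 1) := by
          refine Real.differentiableAt_Gamma (fun m => ?_) |>.continuousAt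
          have hm : (0:ℝ) ≤ m := Nat.cast_nonneg m
          intro h; rw [zero_div, zero_add] at h; nlinarith
        exact ContinuousAt.comp (g := Real.Gamma) (f := fun h : ℝ => h / τ + 1) (x := (0:ℝ)) hG1' (hdiv.add continuousAt_const)
      have hpow : ContinuousAt (fun h : ℝ => p ^ (h / τ)) 0 :=
        ContinuousAt.comp (g := (p ^ ·)) (f := fun h : ℝ => h / τ) (x := (0:ℝ))
          (Real.continuousAt_const_rpow hp0.ne') hdiv
      have hden : (fun h : ℝ => τ * (Nat.factorial k) * Real.Gamma (h / τ + 1)) 0 ≠ 0 := by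
        simp only [zero_div, zero_add, Real.Gamma_one]
        positivity
      exact ((hG1.div ((continuousAt_const.mul continuousAt_const).mul hG2)
        (by simpa using hden)).mul hpow).mul continuousAt_const
    have h2 := hcont.tendsto.mono_left
      (nhdsWithin_le_nhds : nhdsWithin (0:ℝ) (Set.Ioi 0) ≤ nhds 0)
    convert h2 using 2
    simp only [zero_div, zero_add, Real.Gamma_one, Real.rpow_zero, mul_one]
    have hΓk : Real.Gamma (k : ℝ) = (Nat.factorial (k - 1) : ℝ) := by
      have h1 : ((k - 1 : ℕ) : ℝ) + 1 = (k : ℝ) := by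
        push_cast [Nat.cast_sub hk]; ring
      rw [← h1, Real.Gamma_nat_eq_factorial]
    rw [hΓk]
    have hfacN : Nat.factorial k = k * Nat.factorial (k - 1) :=
      (Nat.mul_factorial_pred (by omega)).symm
    have hfac : (Nat.factorial k : ℝ) = k * Nat.factorial (k - 1) := by
      exact_mod_cast congrArg (Nat.cast : ℕ → ℝ) hfacN
    rw [hfac]
    have hk0 : (k : ℝ) ≠ 0 := by positivity
    have hf0 : (Nat.factorial (k-1) : ℝ) ≠ 0 := by positivity
    field_simp
  refine hg.congr' ?_
  filter_upwards [self_mem_nhdsWithin] with h hh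
  have hh0 : (0:ℝ) < h := hh
  have hx : (0:ℝ) < h / τ := div_pos hh0 hτ
  have hΓ : Real.Gamma (h / τ + 1) = (h / τ) * Real.Gamma (h / τ) := Real.Gamma_add_one hx.ne'
  have hΓpos : 0 < Real.Gamma (h / τ) := Real.Gamma_pos_of_pos hx
  rw [hΓ]
  have hfk : (Nat.factorial k : ℝ) ≠ 0 := by positivity
  field_simp
end

section
/- For all real δ > 0, τ > 0, h > 0 and all natural numbers ñ ≥ 1 and 0 ≤ k ≤ ñ, setting a = h/τ and b = 1/(δτ), one has ∫_0^∞ C(ñ,k)(1 − e^{-x})^k e^{-(ñ−k)x} · (b^a x^{a-1} e^{-bx}/Γ(a)) dx = C(ñ,k) Σ_{j=0}^{k} C(k,j) (−1)^{k−j} (1 + δτ(ñ−j))^{−h/τ}. (This gives the increment probabilities of the binomial gamma process, the counting process of a linear death process with gamma-noise-driven rate.) -/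
open MeasureTheory Real

lemma integrableOn_rpow_mul_exp_neg_mul_aux {a c : ℝ} (ha : 0 < a) (hc : 0 < c) :
    IntegrableOn (fun x : ℝ => x ^ (a - 1) * Real.exp (-(c * x))) (Set.Ioi 0) := by
  have h1 : IntegrableOn (fun x : ℝ => Real.exp (-(c * x)) * (c * x) ^ (a - 1))
      (Set.Ioi 0) := by
    have := (MeasureTheory.integrableOn_Ioi_comp_mul_left_iff
      (fun x : ℝ => Real.exp (-x) * x ^ (a - 1)) 0 hc).2
      (by simpa using Real.GammaIntegral_convergent ha)
    simpa using this
  have h2 : IntegrableOn (fun x : ℝ => (c ^ (a - 1))⁻¹ *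
      (Real.exp (-(c * x)) * (c * x) ^ (a - 1))) (Set.Ioi 0) := h1.const_mul _
  refine h2.congr_fun (fun x hx => ?_) measurableSet_Ioi
  have hx0 : 0 < x := hx
  dsimp only
  rw [Real.mul_rpow hc.le hx0.le]
  field_simp [(Real.rpow_pos_of_pos hc (a - 1)).ne']

/-- Increment probabilities of the binomial gamma process (counting process of a linear
death process with gamma-noise-driven rate): integrating the binomial increment
probability against the gamma density gives the stated alternating sum.
Here `n` plays the role of `ñ`, the number of individuals still alive. -/
theorem binomial_gamma_increment_prob
    (δ τ h : ℝ) (hδ : 0 < δ) (hτ : 0 < τ) (hh : 0 < h)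
    (n k : ℕ) (hn : 1 ≤ n) (hk : k ≤ n)
    (a b : ℝ) (ha : a = h / τ) (hb : b = 1 / (δ * τ)) :
    ∫ x in Set.Ioi (0 : ℝ),
        (n.choose k : ℝ) * (1 - Real.exp (-x)) ^ k * Real.exp (-(((n : ℝ) - k) * x)) *
          (b ^ a * x ^ (a - 1) * Real.exp (-(b * x)) / Real.Gamma a)
      = (n.choose k : ℝ) *
          ∑ j ∈ Finset.range (k + 1),
            (k.choose j : ℝ) * (-1 : ℝ) ^ (k - j) *
              (1 + δ * τ * ((n : ℝ) - j)) ^ (-(h / τ)) := by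
  have ha0 : 0 < a := by rw [ha]; positivity
  have hb0 : 0 < b := by rw [hb]; positivity
  have hΓ : 0 < Real.Gamma a := Real.Gamma_pos_of_pos ha0
  -- positivity of the rates
  have hc : ∀ j ∈ Finset.range (k + 1), 0 < b + ((n : ℝ) - j) := by
    intro j hj
    have hjk : j ≤ n := le_trans (Nat.lt_succ_iff.mp (Finset.mem_range.mp hj)) hk
    have : (j : ℝ) ≤ (n : ℝ) := by exact_mod_cast hjk
    linarith
  -- pointwise rewriting of the integrand as a finite sum
  have key : ∀ x ∈ Set.Ioi (0 : ℝ),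
      (n.choose k : ℝ) * (1 - Real.exp (-x)) ^ k * Real.exp (-(((n : ℝ) - k) * x)) *
          (b ^ a * x ^ (a - 1) * Real.exp (-(b * x)) / Real.Gamma a)
        = ∑ j ∈ Finset.range (k + 1),
            (n.choose k : ℝ) * (k.choose j : ℝ) * (-1 : ℝ) ^ (k - j) *
              (b ^ a / Real.Gamma a) *
              (x ^ (a - 1) * Real.exp (-((b + ((n : ℝ) - j)) * x))) := by
    intro x _
    rw [sub_pow]
    rw [Finset.mul_sum, Finset.sum_mul, Finset.sum_mul]
    refine Finset.sum_congr rfl fun j hj => ?_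
    have hjk : j ≤ k := Nat.lt_succ_iff.mp (Finset.mem_range.mp hj)
    have hsign : (-1 : ℝ) ^ (j + k) = (-1 : ℝ) ^ (k - j) := by
      have hjk2 : j + k = (k - j) + 2 * j := by omega
      rw [hjk2, pow_add, pow_mul]
      simp
    have hexp : Real.exp (-x) ^ (k - j) = Real.exp (-(((k : ℝ) - j) * x)) := by
      rw [← Real.exp_nat_mul]
      congr 1
      have : ((k - j : ℕ) : ℝ) = (k : ℝ) - j := by
        rw [Nat.cast_sub hjk]
      rw [this]; ring
    rw [hsign, hexp, one_pow]
    have hexp2 : Real.exp (-(((k : ℝ) - j) * x)) * Real.exp (-(((n : ℝ) - k) * x)) *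
        Real.exp (-(b * x)) = Real.exp (-((b + ((n : ℝ) - j)) * x)) := by
      rw [← Real.exp_add, ← Real.exp_add]
      congr 1; ring
    field_simp
    rw [show x * (b + ((n : ℝ) - j)) = (b + ((n : ℝ) - j)) * x by ring, ← hexp2,
      show x * ((n : ℝ) - k) = ((n : ℝ) - k) * x by ring, show x * b = b * x by ring]
    ring
  rw [MeasureTheory.setIntegral_congr_fun measurableSet_Ioi key]
  rw [MeasureTheory.integral_finset_sum]
  · rw [Finset.mul_sum]
    refine Finset.sum_congr rfl fun j hj => ?_
    rw [MeasureTheory.integral_const_mul]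
    rw [Real.integral_rpow_mul_exp_neg_mul_Ioi ha0 (hc j hj)]
    have hval : b ^ a / Real.Gamma a * ((1 / (b + ((n : ℝ) - j))) ^ a * Real.Gamma a)
        = (1 + δ * τ * ((n : ℝ) - j)) ^ (-(h / τ)) := by
      have hcj := hc j hj
      have hs : (0 : ℝ) ≤ (n : ℝ) - j := by
        have hjn : j ≤ n := le_trans (Nat.lt_succ_iff.mp (Finset.mem_range.mp hj)) hk
        have : (j : ℝ) ≤ (n : ℝ) := by exact_mod_cast hjn
        linarith
      have h1pos : 0 < 1 + δ * τ * ((n : ℝ) - j) := by positivity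
      have hcj' : 0 < 1 / (δ * τ) + ((n : ℝ) - j) := hb ▸ hcj
      have hfrac : b * (1 / (b + ((n : ℝ) - j))) = (1 + δ * τ * ((n : ℝ) - j))⁻¹ := by
        rw [hb]
        field_simp
      calc b ^ a / Real.Gamma a * ((1 / (b + ((n : ℝ) - j))) ^ a * Real.Gamma a)
          = (b * (1 / (b + ((n : ℝ) - j)))) ^ a := by
            rw [Real.mul_rpow hb0.le (by positivity)]
            field_simp
        _ = ((1 + δ * τ * ((n : ℝ) - j))⁻¹) ^ a := by rw [hfrac]
        _ = (1 + δ * τ * ((n : ℝ) - j)) ^ (-(h / τ)) := by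
            rw [Real.inv_rpow h1pos.le, ← Real.rpow_neg h1pos.le, ha]
    rw [← hval]
    ring
  · intro j hj
    exact (integrableOn_rpow_mul_exp_neg_mul_aux ha0 (hc j hj)).const_mul _
end

section
/- For all real δ > 0, τ > 0 and every natural number ñ, lim_{h → 0+} (1/h) · [ ñ^2 ((1+2δτ)^{−h/τ} − (1+δτ)^{−2h/τ}) + ñ((1+δτ)^{−h/τ} − (1+2δτ)^{−h/τ}) ] = ñ τ^{-1} ln(1+δτ) + ñ(ñ−1) τ^{-1} ln( (1+δτ)^2 / (1+2δτ) ). (This is the infinitesimal variance of the binomial gamma process when ñ individuals remain alive: the bracketed quantity equals ñ^2·Var[Π(h)] + ñ·E[Π(h)(1−Π(h))] for the random death probability Π(h) = 1 − e^{−δΔΓ(h)} with ΔΓ(h) ~ Gamma(h/τ, scale τ).) -/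
open Filter Real

/-- Infinitesimal variance of the binomial gamma process when `n` (i.e. `ñ`) individuals
remain alive. -/
theorem binomial_gamma_infinitesimal_variance
    (δ τ : ℝ) (hδ : 0 < δ) (hτ : 0 < τ) (n : ℕ) :
    Tendsto
      (fun h : ℝ =>
        (1 / h) *
          ((n : ℝ) ^ 2 * ((1 + 2 * δ * τ) ^ (-(h / τ)) - (1 + δ * τ) ^ (-(2 * h / τ))) +
            (n : ℝ) * ((1 + δ * τ) ^ (-(h / τ)) - (1 + 2 * δ * τ) ^ (-(h / τ)))))
      (nhdsWithin 0 (Set.Ioi 0))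
      (nhds ((n : ℝ) * τ⁻¹ * Real.log (1 + δ * τ) +
        (n : ℝ) * ((n : ℝ) - 1) * τ⁻¹ *
          Real.log ((1 + δ * τ) ^ 2 / (1 + 2 * δ * τ)))) := by
  have h1 : (0:ℝ) < 1 + δ * τ := by positivity
  have h2 : (0:ℝ) < 1 + 2 * δ * τ := by positivity
  set L1 := Real.log (1 + δ * τ) with hL1
  set L2 := Real.log (1 + 2 * δ * τ) with hL2
  set g : ℝ → ℝ := fun h =>
    (n:ℝ)^2 * (Real.exp (L2 * -(h/τ)) - Real.exp (L1 * -(2*h/τ))) +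
      (n:ℝ) * (Real.exp (L1 * -(h/τ)) - Real.exp (L2 * -(h/τ))) with hg
  have dlin : ∀ c : ℝ, HasDerivAt (fun h : ℝ => c * -(h/τ)) (c * -(1/τ)) 0 := by
    intro c
    simpa using (((hasDerivAt_id (0:ℝ)).div_const τ).neg.const_mul c)
  have dlin2 : HasDerivAt (fun h : ℝ => L1 * -(2*h/τ)) (L1 * -(2/τ)) 0 := by
    have : HasDerivAt (fun h : ℝ => 2*h) 2 0 := by
      simpa using (hasDerivAt_id (0:ℝ)).const_mul 2
    simpa [mul_div_assoc] using ((this.div_const τ).neg.const_mul L1)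
  have e1 : HasDerivAt (fun h : ℝ => Real.exp (L2 * -(h/τ))) (L2 * -(1/τ)) 0 := by
    simpa using (dlin L2).exp
  have e2 : HasDerivAt (fun h : ℝ => Real.exp (L1 * -(2*h/τ))) (L1 * -(2/τ)) 0 := by
    simpa using dlin2.exp
  have e3 : HasDerivAt (fun h : ℝ => Real.exp (L1 * -(h/τ))) (L1 * -(1/τ)) 0 := by
    simpa using (dlin L1).exp
  have hderiv : HasDerivAt g
      ((n:ℝ)^2 * (L2 * -(1/τ) - L1 * -(2/τ)) + (n:ℝ) * (L1 * -(1/τ) - L2 * -(1/τ))) 0 :=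
    (((e1.sub e2).const_mul ((n:ℝ)^2)).add ((e3.sub e1).const_mul (n:ℝ)))
  have hslope : Tendsto (slope g 0) (nhdsWithin 0 (Set.Ioi 0))
      (nhds ((n:ℝ)^2 * (L2 * -(1/τ) - L1 * -(2/τ)) + (n:ℝ) * (L1 * -(1/τ) - L2 * -(1/τ)))) := by
    refine (hasDerivAt_iff_tendsto_slope.mp hderiv).mono_left (nhdsWithin_mono _ ?_)
    intro x hx
    exact ne_of_gt hx
  have hval : ((n:ℝ)^2 * (L2 * -(1/τ) - L1 * -(2/τ)) + (n:ℝ) * (L1 * -(1/τ) - L2 * -(1/τ)))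
      = ((n : ℝ) * τ⁻¹ * Real.log (1 + δ * τ) +
        (n : ℝ) * ((n : ℝ) - 1) * τ⁻¹ *
          Real.log ((1 + δ * τ) ^ 2 / (1 + 2 * δ * τ))) := by
    rw [Real.log_div (by positivity) (ne_of_gt h2), Real.log_pow]
    push_cast
    rw [← hL1, ← hL2]
    field_simp
    ring
  rw [← hval]
  refine hslope.congr' ?_
  filter_upwards [self_mem_nhdsWithin] with h hh
  have hg0 : g 0 = 0 := by simp [hg]
  rw [slope_def_field, hg0]
  have hb2 : (1 + 2 * δ * τ : ℝ) ^ (-(h / τ)) = Real.exp (L2 * -(h/τ)) :=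
    Real.rpow_def_of_pos h2 _
  have hb1 : (1 + δ * τ : ℝ) ^ (-(2 * h / τ)) = Real.exp (L1 * -(2*h/τ)) :=
    Real.rpow_def_of_pos h1 _
  have hb3 : (1 + δ * τ : ℝ) ^ (-(h / τ)) = Real.exp (L1 * -(h/τ)) :=
    Real.rpow_def_of_pos h1 _
  rw [hg, hb1, hb2, hb3]
  ring
end

section
/- For all real c > 0, δ > 0 and all natural numbers ñ ≥ 1 and 1 ≤ k ≤ ñ, setting α(h) = c(1 − e^{−δh}) and β(h) = c e^{−δh}, one has lim_{h → 0+} (1/h) · C(ñ,k) · Γ(c) Γ(k+α(h)) Γ(ñ−k+β(h)) / ( Γ(α(h)) Γ(β(h)) Γ(c+ñ) ) = C(ñ,k) · (Γ(k) Γ(c+ñ−k)/Γ(c+ñ)) · c δ. (This identifies the infinitesimal jump probabilities of the binomial beta process; note α(h)+β(h) = c, so the displayed expression is the beta-binomial probability of a jump of size k.) -/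
open Filter Real

private lemma contGamma {s : ℝ} (hs : 0 < s) : ContinuousAt Real.Gamma s :=
  (Real.differentiableAt_Gamma (fun m => by
    have : (0:ℝ) ≤ m := Nat.cast_nonneg m
    intro h; rw [h] at hs; linarith)).continuousAt

/-- Infinitesimal jump probabilities of the binomial beta process: with
`α(h) = c(1 − e^{−δh})` and `β(h) = c e^{−δh}` (so `α(h)+β(h) = c`), the beta-binomial
probability of a jump of size `k` out of `n` (i.e. `ñ`) satisfies the stated limit. -/
theorem binomial_beta_infinitesimal_prob
    (c δ : ℝ) (hc : 0 < c) (hδ : 0 < δ)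
    (n k : ℕ) (hn : 1 ≤ n) (hk1 : 1 ≤ k) (hk : k ≤ n)
    (α β : ℝ → ℝ)
    (hα : ∀ h : ℝ, α h = c * (1 - Real.exp (-(δ * h))))
    (hβ : ∀ h : ℝ, β h = c * Real.exp (-(δ * h))) :
    Tendsto
      (fun h : ℝ =>
        (1 / h) * ((n.choose k : ℝ) *
          (Real.Gamma c * Real.Gamma (k + α h) * Real.Gamma ((n : ℝ) - k + β h) /
            (Real.Gamma (α h) * Real.Gamma (β h) * Real.Gamma (c + n)))))
      (nhdsWithin 0 (Set.Ioi 0))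
      (nhds ((n.choose k : ℝ) *
        (Real.Gamma k * Real.Gamma (c + n - k) / Real.Gamma (c + n)) * c * δ)) := by
  have hce : Real.Gamma c ≠ 0 := (Real.Gamma_pos_of_pos hc).ne'
  have hkpos : (0:ℝ) < k := by exact_mod_cast hk1
  have hnk : (0:ℝ) < (n:ℝ) - k + c := by
    have : (k:ℝ) ≤ n := by exact_mod_cast hk
    linarith
  have hcn : (0:ℝ) < c + n := by positivity
  have hαc : Continuous α := by
    have : α = fun h => c * (1 - Real.exp (-(δ * h))) := funext hα
    rw [this]; fun_prop
  have hβc : Continuous β := by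
    have : β = fun h => c * Real.exp (-(δ * h)) := funext hβ
    rw [this]; fun_prop
  have hα0 : α 0 = 0 := by rw [hα]; simp
  have hβ0 : β 0 = c := by rw [hβ]; simp
  have hA0 : Tendsto α (nhdsWithin 0 (Set.Ioi 0)) (nhds 0) := by
    have := (hαc.continuousAt (x := 0)).tendsto
    rw [hα0] at this
    exact this.mono_left nhdsWithin_le_nhds
  have hB0 : Tendsto β (nhdsWithin 0 (Set.Ioi 0)) (nhds c) := by
    have := (hβc.continuousAt (x := 0)).tendsto
    rw [hβ0] at this
    exact this.mono_left nhdsWithin_le_nhds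
  have hslope : Tendsto (fun h => α h / h) (nhdsWithin 0 (Set.Ioi 0)) (nhds (c * δ)) := by
    have hd : HasDerivAt (fun h : ℝ => c * (1 - Real.exp (-(δ * h)))) (c * δ) 0 := by
      have h1 : HasDerivAt (fun h : ℝ => -(δ * h)) (-δ) 0 := by
        simpa using (hasDerivAt_id' (0:ℝ)).const_mul (-δ)
      have h3 := (h1.exp.const_sub 1).const_mul c
      simpa using h3
    have ht := hasDerivAt_iff_tendsto_slope.mp hd
    have ht2 := ht.mono_left (nhdsWithin_mono _ (fun x hx => ne_of_gt hx))
    refine ht2.congr (fun h => ?_)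
    rw [slope_def_field, hα]
    simp
  have hnum : Tendsto (fun h => Real.Gamma c * Real.Gamma (k + α h) *
      Real.Gamma ((n:ℝ) - k + β h)) (nhdsWithin 0 (Set.Ioi 0))
      (nhds (Real.Gamma c * Real.Gamma ((k:ℝ) + 0) * Real.Gamma ((n:ℝ) - k + c))) :=
    (tendsto_const_nhds.mul ((contGamma (by simpa using hkpos)).tendsto.comp
      (tendsto_const_nhds.add hA0))).mul
      ((contGamma hnk).tendsto.comp (tendsto_const_nhds.add hB0))
  have hden : Tendsto (fun h => Real.Gamma (α h + 1) * Real.Gamma (β h) *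
      Real.Gamma (c + n)) (nhdsWithin 0 (Set.Ioi 0))
      (nhds (Real.Gamma ((0:ℝ) + 1) * Real.Gamma c * Real.Gamma (c + n))) :=
    (((contGamma (by norm_num)).tendsto.comp (hA0.add tendsto_const_nhds)).mul
      ((contGamma hc).tendsto.comp hB0)).mul tendsto_const_nhds
  have hden0 : Real.Gamma ((0:ℝ) + 1) * Real.Gamma c * Real.Gamma (c + n) ≠ 0 :=
    mul_ne_zero (mul_ne_zero (Real.Gamma_pos_of_pos (by norm_num)).ne' hce)
      (Real.Gamma_pos_of_pos hcn).ne'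
  have hg : Tendsto (fun h => (α h / h) * ((n.choose k : ℝ) *
      (Real.Gamma c * Real.Gamma (k + α h) * Real.Gamma ((n:ℝ) - k + β h) /
        (Real.Gamma (α h + 1) * Real.Gamma (β h) * Real.Gamma (c + n)))))
      (nhdsWithin 0 (Set.Ioi 0))
      (nhds ((c * δ) * ((n.choose k : ℝ) *
      (Real.Gamma c * Real.Gamma ((k:ℝ) + 0) * Real.Gamma ((n:ℝ) - k + c) /
        (Real.Gamma ((0:ℝ) + 1) * Real.Gamma c * Real.Gamma (c + n)))))) :=
    hslope.mul (tendsto_const_nhds.mul (hnum.div hden hden0))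
  have heq : ∀ᶠ h in nhdsWithin (0:ℝ) (Set.Ioi 0),
      (α h / h) * ((n.choose k : ℝ) *
        (Real.Gamma c * Real.Gamma (k + α h) * Real.Gamma ((n:ℝ) - k + β h) /
          (Real.Gamma (α h + 1) * Real.Gamma (β h) * Real.Gamma (c + n)))) =
      (1 / h) * ((n.choose k : ℝ) *
        (Real.Gamma c * Real.Gamma (k + α h) * Real.Gamma ((n : ℝ) - k + β h) /
          (Real.Gamma (α h) * Real.Gamma (β h) * Real.Gamma (c + n)))) := by
    filter_upwards [self_mem_nhdsWithin] with h hh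
    have hh0 : (0:ℝ) < h := hh
    have hαpos : 0 < α h := by
      rw [hα]
      have : Real.exp (-(δ * h)) < 1 := by
        rw [Real.exp_lt_one_iff]; nlinarith
      nlinarith
    rw [Real.Gamma_add_one hαpos.ne']
    have hΓα : Real.Gamma (α h) ≠ 0 := (Real.Gamma_pos_of_pos hαpos).ne'
    field_simp [hαpos.ne', hΓα]
  have hval : (c * δ) * ((n.choose k : ℝ) *
      (Real.Gamma c * Real.Gamma ((k:ℝ) + 0) * Real.Gamma ((n:ℝ) - k + c) /
        (Real.Gamma ((0:ℝ) + 1) * Real.Gamma c * Real.Gamma (c + n)))) =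
      (n.choose k : ℝ) * (Real.Gamma k * Real.Gamma (c + n - k) / Real.Gamma (c + n)) * c * δ := by
    rw [show ((0:ℝ) + 1) = 1 by ring, Real.Gamma_one, add_zero,
      show c + (n:ℝ) - k = (n:ℝ) - k + c by ring]
    field_simp
  rw [← hval]
  exact hg.congr' heq
end
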